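/- Let (y_k)_{k≥0} be a bounded sequence in R^d satisfying, coordinate-wise, y_{k+1}[n] ≤ (1−β_{n,k}) y_k[n] + β_{n,k}(γ‖y_k‖_∞ + ε̄_k) and y_{k+1}[n] ≥ (1−β_{n,k}) y_k[n] + β_{n,k}(−γ‖y_k‖_∞ + ε_k), where γ ∈ (0,1), β_{n,k} ∈ (0,1] with Σ_k β_{n,k} = ∞ and β_{n,k} → 0 for each n, and limsup_k |ε̄_k| ≤ c, limsup_k |ε_k| ≤ c. Then limsup_{k→∞} ‖y_k‖_∞ ≤ c/(1−γ). -/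
import Mathlib


open Filter

/-- Deterministic stochastic-approximation lemma: if a bounded sequence `(y_k)` satisfies the
coordinate-wise sandwich recursions with contraction factor `γ ∈ (0,1)`, step sizes
`β_{n,k} ∈ (0,1]` with `∑_k β_{n,k} = ∞`, `β_{n,k} → 0`, and error sequences whose limsups of
absolute values are at most `c`, then `limsup_k ‖y_k‖_∞ ≤ c/(1−γ)`. -/
theorem stochastic_approximation_contraction {ι : Type*} [Fintype ι] [Nonempty ι]
    (y : ℕ → ι → ℝ) (β : ι → ℕ → ℝ) (γ c : ℝ) (ebar eund : ℕ → ℝ)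
    (hγ0 : 0 < γ) (hγ1 : γ < 1) (hc : 0 ≤ c)
    (hβmem : ∀ n k, β n k ∈ Set.Ioc (0 : ℝ) 1)
    (hβsum : ∀ n, Tendsto (fun K => ∑ k ∈ Finset.range K, β n k) atTop atTop)
    (hβ0 : ∀ n, Tendsto (β n) atTop (nhds 0))
    (hebar : ∀ δ > (0:ℝ), ∀ᶠ k in atTop, |ebar k| ≤ c + δ)
    (heund : ∀ δ > (0:ℝ), ∀ᶠ k in atTop, |eund k| ≤ c + δ)
    (hbdd : ∃ M : ℝ, ∀ k n, |y k n| ≤ M)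
    (hub : ∀ k n, y (k + 1) n ≤ (1 - β n k) * y k n +
      β n k * (γ * Finset.univ.sup' Finset.univ_nonempty (fun m => |y k m|) + ebar k))
    (hlb : ∀ k n, (1 - β n k) * y k n +
      β n k * (-(γ * Finset.univ.sup' Finset.univ_nonempty (fun m => |y k m|)) + eund k) ≤
      y (k + 1) n) :
    Filter.limsup
      (fun k => Finset.univ.sup' Finset.univ_nonempty (fun m => |y k m|)) atTop ≤
      c / (1 - γ) := by
  obtain ⟨M, hM⟩ := hbdd
  set S : ℕ → ℝ := fun k => Finset.univ.sup' Finset.univ_nonempty (fun m => |y k m|) with hSdef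
  have hS0 : ∀ k, 0 ≤ S k := fun k =>
    le_trans (abs_nonneg (y k (Classical.arbitrary ι)))
      (Finset.le_sup' (fun m => |y k m|) (Finset.mem_univ (Classical.arbitrary ι)))
  have hSM : ∀ k, S k ≤ M := fun k => Finset.sup'_le _ _ fun n _ => hM k n
  have hbddS : IsBoundedUnder (· ≤ ·) atTop S := Filter.isBoundedUnder_of ⟨M, hSM⟩
  have hcobS : IsCoboundedUnder (· ≤ ·) atTop S :=
    IsBoundedUnder.isCoboundedUnder_le (Filter.isBoundedUnder_of ⟨0, fun k => (hS0 k : S k ≥ 0)⟩)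
  set L := limsup S atTop with hLdef
  have key : ∀ δ > (0:ℝ), L ≤ γ * (L + δ) + c + δ + δ := by
    intro δ hδ
    have h1 : ∀ᶠ k in atTop, S k < L + δ :=
      eventually_lt_of_limsup_lt (by linarith) hbddS
    have hev : ∀ᶠ k in atTop, S k ≤ L + δ ∧ |ebar k| ≤ c + δ ∧ |eund k| ≤ c + δ := by
      filter_upwards [h1, hebar δ hδ, heund δ hδ] with k h1 h2 h3
      exact ⟨h1.le, h2, h3⟩
    obtain ⟨K, hK⟩ := Filter.eventually_atTop.1 hev
    set a := γ * (L + δ) + c + δ with hadef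
    have hcoord : ∀ n : ι, ∀ᶠ k in atTop, |y k n| ≤ a + δ := by
      intro n
      have hβpos : ∀ j, 0 < β n j := fun j => (hβmem n j).1
      have hβle : ∀ j, β n j ≤ 1 := fun j => (hβmem n j).2
      set C := max (|y K n|) a - a with hCdef
      have hC0 : 0 ≤ C := sub_nonneg.2 (le_max_right _ _)
      set P : ℕ → ℝ := fun k => ∏ j ∈ Finset.Ico K k, (1 - β n j) with hPdef
      have hP0 : ∀ k, 0 ≤ P k := fun k =>
        Finset.prod_nonneg fun j _ => by linarith [hβle j]
      have hPexp : ∀ k, P k ≤ Real.exp (-(∑ j ∈ Finset.Ico K k, β n j)) := by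
        intro k
        calc P k ≤ ∏ j ∈ Finset.Ico K k, Real.exp (-(β n j)) := by
              apply Finset.prod_le_prod (fun j _ => by linarith [hβle j])
                (fun j _ => by linarith [Real.add_one_le_exp (-(β n j))])
          _ = Real.exp (∑ j ∈ Finset.Ico K k, -(β n j)) := (Real.exp_sum _ _).symm
          _ = Real.exp (-(∑ j ∈ Finset.Ico K k, β n j)) := by rw [Finset.sum_neg_distrib]
      have hsum : Tendsto (fun k => ∑ j ∈ Finset.Ico K k, β n j) atTop atTop := by
        apply Tendsto.congr' _
          (tendsto_atTop_add_const_right atTop (-(∑ j ∈ Finset.range K, β n j)) (hβsum n))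
        filter_upwards [eventually_ge_atTop K] with k hk
        rw [← sub_eq_add_neg, Finset.sum_Ico_eq_sub _ hk]
      have hexp : Tendsto (fun k => Real.exp (-(∑ j ∈ Finset.Ico K k, β n j))) atTop (nhds 0) :=
        Real.tendsto_exp_atBot.comp (tendsto_neg_atTop_atBot.comp hsum)
      have hPtend : Tendsto P atTop (nhds 0) :=
        tendsto_of_tendsto_of_tendsto_of_le_of_le tendsto_const_nhds hexp hP0 hPexp
      have hrec : ∀ k, K ≤ k → max (|y k n|) a ≤ a + P k * C := by
        intro k hk
        induction k, hk using Nat.le_induction with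
        | base =>
          have hPK : P K = 1 := by simp [hPdef]
          rw [hPK, hCdef]
          linarith [le_max_left (|y K n|) a]
        | succ k hk ih =>
          have hb := hβpos k
          have hb1 := hβle k
          have hKk := hK k hk
          have hSk : S k ≤ L + δ := hKk.1
          have he1 : ebar k ≤ c + δ := le_trans (le_abs_self _) hKk.2.1
          have he2 : -(c + δ) ≤ eund k := by linarith [neg_abs_le (eund k), hKk.2.2]
          have hγS : γ * S k ≤ γ * (L + δ) := mul_le_mul_of_nonneg_left hSk hγ0.le
          have hup2 : β n k * (γ * S k + ebar k) ≤ β n k * a :=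
            mul_le_mul_of_nonneg_left (by rw [hadef]; linarith) hb.le
          have hlow2 : β n k * (-a) ≤ β n k * (-(γ * S k) + eund k) :=
            mul_le_mul_of_nonneg_left (by rw [hadef]; linarith) hb.le
          have hy1 : (1 - β n k) * y k n ≤ (1 - β n k) * |y k n| :=
            mul_le_mul_of_nonneg_left (le_abs_self _) (by linarith)
          have hy2 : (1 - β n k) * (-|y k n|) ≤ (1 - β n k) * y k n :=
            mul_le_mul_of_nonneg_left (neg_abs_le _) (by linarith)
          have habs : |y (k + 1) n| ≤ (1 - β n k) * |y k n| + β n k * a := by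
            have hu := hub k n
            have hl := hlb k n
            rw [abs_le]
            constructor
            · nlinarith
            · nlinarith
          have h1b : (0:ℝ) ≤ 1 - β n k := by linarith
          have hm : (1 - β n k) * |y k n| ≤ (1 - β n k) * (a + P k * C) :=
            mul_le_mul_of_nonneg_left (le_trans (le_max_left _ _) ih) h1b
          have hP' : P (k + 1) = P k * (1 - β n k) := by
            simp only [hPdef]
            exact Finset.prod_Ico_succ_top hk _
          refine max_le ?_ ?_
          · calc |y (k + 1) n| ≤ (1 - β n k) * (a + P k * C) + β n k * a := by linarith
              _ = a + P (k + 1) * C := by rw [hP']; ring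
          · have hnn : 0 ≤ P (k + 1) * C := mul_nonneg (hP0 _) hC0
            linarith
      have hPC : ∀ᶠ k in atTop, P k * C < δ := by
        have h0 : Tendsto (fun k => P k * C) atTop (nhds 0) := by
          simpa using hPtend.mul_const C
        exact h0.eventually_lt_const hδ
      filter_upwards [hPC, eventually_ge_atTop K] with k h1 h2
      have h3 := hrec k h2
      have h4 := le_max_left (|y k n|) a
      linarith
    have hall : ∀ᶠ k in atTop, ∀ n : ι, |y k n| ≤ a + δ := eventually_all.2 hcoord
    have hSev : ∀ᶠ k in atTop, S k ≤ a + δ := by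
      filter_upwards [hall] with k hk
      exact Finset.sup'_le _ _ fun n _ => hk n
    have hfin : L ≤ a + δ := limsup_le_of_le hcobS hSev
    rw [hadef] at hfin
    linarith
  have h3 : L ≤ γ * L + c := by
    apply le_of_forall_pos_le_add
    intro ε hε
    have hne : γ + 2 ≠ 0 := by linarith
    have hδ : 0 < ε / (γ + 2) := div_pos hε (by linarith)
    have hk := key (ε / (γ + 2)) hδ
    have h4 : γ * (ε / (γ + 2)) + ε / (γ + 2) + ε / (γ + 2) = ε := by
      field_simp
      ring
    linarith
  have hfin : L * (1 - γ) ≤ c := by nlinarith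
  rw [le_div_iff₀ (by linarith : (0:ℝ) < 1 - γ)]
  exact hfin
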